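/- Let K be a cycle-free Markov kernel on a countable set G such that for every z ∈ G, two independent Markov chains with kernel K started from z almost surely have a collision (i.e., (ℙ_z ⊗ ℙ_z)({∃ m ≥ 1, n ≥ 1 : X_m = Y_n}) = 1). Then for every z ∈ G, two independent chains started from z almost surely have infinitely many collisions: (ℙ_z ⊗ ℙ_z)-almost surely, the set {(m,n) : m ≥ 1, n ≥ 1, X_m = Y_n} is infinite. -/

import Mathlib

set_option linter.unusedSectionVars false
open scoped ENNReal


open MeasureTheory

namespace CMTPaper

variable {G : Type*}

/-- The `n`-step kernel of a Markov kernel `K` on a countable set `G`: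
`K^0(x,·) = δ_x` and `K^{n+1}(x,A) = Σ_y K(x,{y})·K^n(y,A)`. -/
noncomputable def nStep [MeasurableSpace G] (K : G → Measure G) : ℕ → G → Measure G
  | 0 => fun x => Measure.dirac x
  | n + 1 => fun x => Measure.sum fun y => K x {y} • nStep K n y

/-- A kernel is cycle-free if `K^m(x,{x}) = 0` for every `x` and every `m ≥ 1`. -/
def CycleFree [MeasurableSpace G] (K : G → Measure G) : Prop :=
  ∀ x : G, ∀ m : ℕ, 1 ≤ m → nStep K m x {x} = 0

/-- `P` is the law on path space `G^ℕ` of the Markov chain with kernel `K` started at `x`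
(characterized by its finite-dimensional cylinder probabilities). -/
def IsPathLaw [MeasurableSpace G] (K : G → Measure G) (x : G) (P : Measure (ℕ → G)) : Prop :=
  ∀ (n : ℕ) (u : ℕ → G), u 0 = x →
    P {ω | ∀ i ≤ n, ω i = u i} = ∏ i ∈ Finset.range n, K (u i) {u (i + 1)}

/-- The set of collisions of two paths: pairs `(m,n)` with `m,n ≥ 1` and `ω m = ω' n`. -/
def collisions (ω ω' : ℕ → G) : Set (ℕ × ℕ) :=
  {p : ℕ × ℕ | 1 ≤ p.1 ∧ 1 ≤ p.2 ∧ ω p.1 = ω' p.2}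

/-- `μ` is the law on `G^G` of the coalescing Markov trajectories (CMT) with kernel `K`,
i.e. the product measure `⊗_x K(x,·)` (characterized on cylinders). -/
def IsCMTLaw [MeasurableSpace G] (K : G → Measure G) (μ : Measure (G → G)) : Prop :=
  ∀ (s : Finset G) (u : G → G), μ {f | ∀ x ∈ s, f x = u x} = ∏ x ∈ s, K x {u x}

/-- Adjacency in the graph of `f`: an edge between `x` and `f x` for every `x`. -/
def Adj (f : G → G) (a b : G) : Prop := f a = b ∨ f b = a

/-- `a` and `b` lie in the same connected component of the graph of `f`. -/
def SameComponent (f : G → G) (a b : G) : Prop := Relation.ReflTransGen (Adj f) a b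

/-- The connected component of `v` in the graph of `f`. -/
def component (f : G → G) (v : G) : Set G := {u | SameComponent f u v}

/-- The level set of `v`: points whose forward orbit merges with that of `v` after the same
number of steps. -/
def levelSet (f : G → G) (v : G) : Set G := {w | ∃ n : ℕ, f^[n] w = f^[n] v}

/-- The ancestor-line map `π (v, f) = (f^{(n)}(v))_{n ≥ 0}`. -/
def ancLine : G × (G → G) → ℕ → G := fun p n => p.2^[n] p.1

section Auxiliary

variable [Countable G] [MeasurableSpace G] [MeasurableSingletonClass G]

lemma measurableSet_all (s : Set G) : MeasurableSet s := s.to_countable.measurableSet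

lemma measurableSet_coordEq (m : ℕ) (g : G) :
    MeasurableSet {ω : ℕ → G | ω m = g} := by
  have : {ω : ℕ → G | ω m = g} = (fun ω : ℕ → G => ω m) ⁻¹' {g} := by ext ω; simp
  rw [this]
  exact measurable_pi_apply m (measurableSet_all {g})

/-- The shift map on path space. -/
def shift (m : ℕ) (ω : ℕ → G) : ℕ → G := fun i => ω (m + i)

lemma measurable_shift (m : ℕ) : Measurable (shift (G := G) m) :=
  measurable_pi_lambda _ fun i => measurable_pi_apply (m + i)

/-- Initial-segment cylinder. -/
def cyl (n : ℕ) (u : ℕ → G) : Set (ℕ → G) := {ω | ∀ i ≤ n, ω i = u i}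

lemma measurableSet_cyl (n : ℕ) (u : ℕ → G) : MeasurableSet (cyl (G := G) n u) := by
  have : cyl (G := G) n u = ⋂ (i : ℕ) (_ : i ≤ n), (fun ω : ℕ → G => ω i) ⁻¹' {u i} := by
    ext ω; simp [cyl]
  rw [this]
  exact MeasurableSet.iInter fun i => MeasurableSet.iInter fun _ =>
    (measurable_pi_apply i) (measurableSet_all _)

/-- The collection of initial-segment cylinders. -/
def cylSet : Set (Set (ℕ → G)) := {S | ∃ n u, S = cyl (G := G) n u}

lemma isPiSystem_cylSet : IsPiSystem (cylSet (G := G)) := by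
  rintro _ ⟨n, u, rfl⟩ _ ⟨n', u', rfl⟩ hne
  obtain ⟨ω, hω, hω'⟩ := hne
  rcases le_total n n' with h | h
  · refine ⟨n', u', ?_⟩
    have hsub : cyl (G := G) n' u' ⊆ cyl n u := by
      intro ψ hψ i hi
      have : u i = u' i := by rw [← hω i hi, hω' i (hi.trans h)]
      rw [hψ i (hi.trans h), ← this]
    rw [Set.inter_eq_self_of_subset_right hsub]
  · refine ⟨n, u, ?_⟩
    have hsub : cyl (G := G) n u ⊆ cyl n' u' := by
      intro ψ hψ i hi
      have : u' i = u i := by rw [← hω' i hi, hω i (hi.trans h)]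
      rw [hψ i (hi.trans h), ← this]
    rw [Set.inter_eq_self_of_subset_left hsub]

lemma coord_eq_iUnion (j : ℕ) (g : G) :
    {ω : ℕ → G | ω j = g}
      = ⋃ v : Fin j → G, cyl j (fun i => if h : i < j then v ⟨i, h⟩ else g) := by
  ext ω
  constructor
  · intro hω
    refine Set.mem_iUnion.2 ⟨fun i => ω i, fun i hi => ?_⟩
    by_cases h' : i < j
    · simp [h']
    · have : i = j := le_antisymm hi (not_lt.1 h')
      subst this
      simp only [h', dif_neg, not_false_iff]
      exact hω
  · rintro h
    obtain ⟨v, hv⟩ := Set.mem_iUnion.1 h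
    have := hv j le_rfl
    simpa using this

lemma generateFrom_cylSet :
    (inferInstance : MeasurableSpace (ℕ → G))
      = MeasurableSpace.generateFrom (cylSet (G := G)) := by
  apply le_antisymm
  · rw [MeasurableSpace.pi_eq_generateFrom_projections]
    apply MeasurableSpace.generateFrom_le
    rintro _ ⟨j, s, _, rfl⟩
    have : (fun ω : ℕ → G => ω j) ⁻¹' s = ⋃ g ∈ s, {ω : ℕ → G | ω j = g} := by
      ext ω; simp [eq_comm]
    rw [this]
    refine MeasurableSet.biUnion s.to_countable fun g _ => ?_
    rw [coord_eq_iUnion]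
    exact MeasurableSet.iUnion fun v =>
      MeasurableSpace.measurableSet_generateFrom ⟨j, _, rfl⟩
  · apply MeasurableSpace.generateFrom_le
    rintro _ ⟨n, u, rfl⟩
    exact measurableSet_cyl n u

variable (K : G → Measure G)

section PathLaw

variable {P : Measure (ℕ → G)} {x : G}

lemma pathLaw_start (hP : IsPathLaw K x P) : P {ω | ω 0 = x} = 1 := by
  have := hP 0 (fun _ => x) rfl
  simpa using this

lemma pathLaw_null_of_ne_start [IsProbabilityMeasure P] (hP : IsPathLaw K x P)
    {S : Set (ℕ → G)} (hS : ∀ ω ∈ S, ω 0 ≠ x) : P S = 0 := by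
  have h1 : P {ω : ℕ → G | ω 0 = x}ᶜ = 0 := by
    rw [prob_compl_eq_zero_iff]
    · exact pathLaw_start K hP
    · exact measurableSet_coordEq 0 x
  exact measure_mono_null (fun ω hω => hS ω hω) h1

lemma pathLaw_cyl' (hP : IsPathLaw K x P) :
    ∀ (n : ℕ) (u : ℕ → G), u 0 = x →
      P (cyl n u) = ∏ i ∈ Finset.range n, K (u i) {u (i + 1)} := hP

lemma pathLaw_cyl_zero [IsProbabilityMeasure P] (hP : IsPathLaw K x P) {n : ℕ} {u : ℕ → G}
    (h : u 0 ≠ x) : P (cyl n u) = 0 :=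
  pathLaw_null_of_ne_start K hP fun ω hω => by rw [hω 0 (Nat.zero_le n)]; exact h

end PathLaw

/-- Glue a finite prefix `v` with a tail `u`. -/
def glue (m : ℕ) (v : Fin m → G) (u : ℕ → G) : ℕ → G :=
  fun i => if h : i < m then v ⟨i, h⟩ else u (i - m)

lemma glue_of_ge (m : ℕ) (v : Fin m → G) (u : ℕ → G) {i : ℕ} (h : m ≤ i) :
    glue m v u i = u (i - m) := by
  simp [glue, not_lt.2 h]

lemma glue_add (m : ℕ) (v : Fin m → G) (u : ℕ → G) (i : ℕ) :
    glue m v u (m + i) = u i := by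
  rw [glue_of_ge m v u (Nat.le_add_right m i)]
  congr 1
  omega

lemma glue_congr (m : ℕ) (v : Fin m → G) {u u' : ℕ → G} (h0 : u 0 = u' 0)
    {i : ℕ} (hi : i ≤ m) : glue m v u i = glue m v u' i := by
  by_cases h : i < m
  · simp [glue, h]
  · have : i = m := le_antisymm hi (not_lt.1 h)
    subst this
    simp [glue, h, h0]

lemma shiftCyl_eq_iUnion (m n : ℕ) (u : ℕ → G) :
    {ω : ℕ → G | ∀ i ≤ n, ω (m + i) = u i}
      = ⋃ v : Fin m → G, cyl (m + n) (glue m v u) := by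
  ext ω
  constructor
  · intro hω
    refine Set.mem_iUnion.2 ⟨fun i => ω i, fun i hi => ?_⟩
    by_cases h : i < m
    · simp [glue, h]
    · have hm : m ≤ i := not_lt.1 h
      rw [glue_of_ge m _ u hm]
      have : ω i = ω (m + (i - m)) := by congr 1; omega
      rw [this]
      exact hω (i - m) (by omega)
  · rintro h i hi
    obtain ⟨v, hv⟩ := Set.mem_iUnion.1 h
    have := hv (m + i) (by omega)
    rwa [glue_add] at this

lemma glue_pairwise_disjoint (m n : ℕ) (u : ℕ → G) :
    Pairwise (Function.onFun Disjoint fun v : Fin m → G => cyl (G := G) (m + n) (glue m v u)) := by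
  intro v v' hvv'
  rw [Function.onFun, Set.disjoint_left]
  intro ω hω hω'
  apply hvv'
  funext i
  have h1 := hω i (by omega)
  have h2 := hω' i (by omega)
  have e1 : glue m v u i = v i := by simp [glue, i.isLt]
  have e2 : glue m v' u i = v' i := by simp [glue, i.isLt]
  rw [e1] at h1; rw [e2] at h2
  rw [← h1, ← h2]

open Classical in
noncomputable def headW (x : G) (m : ℕ) (v : Fin m → G) (z : G) : ℝ≥0∞ :=
  if glue m v (fun _ => z) 0 = x then
    ∏ i ∈ Finset.range m, K (glue m v (fun _ => z) i) {glue m v (fun _ => z) (i + 1)}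
  else 0

lemma pathLaw_shiftCyl {P : Measure (ℕ → G)} {x : G} [IsProbabilityMeasure P]
    (hP : IsPathLaw K x P) (m n : ℕ) (u : ℕ → G) :
    P {ω : ℕ → G | ∀ i ≤ n, ω (m + i) = u i}
      = (∑' v : Fin m → G, headW K x m v (u 0))
          * ∏ i ∈ Finset.range n, K (u i) {u (i + 1)} := by
  rw [shiftCyl_eq_iUnion, measure_iUnion (glue_pairwise_disjoint m n u)
    (fun v => measurableSet_cyl _ _)]
  rw [← ENNReal.tsum_mul_right]
  congr 1
  funext v
  classical
  have h0 : glue m v u 0 = glue m v (fun _ => u 0) 0 :=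
    glue_congr m v (u' := fun _ => u 0) rfl (Nat.zero_le m)
  by_cases hx : glue m v u 0 = x
  · rw [pathLaw_cyl' K hP _ _ hx, headW, if_pos (h0 ▸ hx), Finset.prod_range_add]
    congr 1
    · apply Finset.prod_congr rfl
      intro i hi
      rw [Finset.mem_range] at hi
      rw [glue_congr m v (u' := fun _ => u 0) rfl (by omega),
        glue_congr m v (u' := fun _ => u 0) rfl (by omega)]
    · apply Finset.prod_congr rfl
      intro i hi
      rw [glue_add, show m + i + 1 = m + (i + 1) by omega, glue_add]
  · rw [pathLaw_cyl_zero K hP hx, headW, if_neg (h0 ▸ hx), zero_mul]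

lemma coordSet_eq (m : ℕ) (z : G) :
    {ω : ℕ → G | ω m = z} = {ω : ℕ → G | ∀ i ≤ 0, ω (m + i) = (fun _ : ℕ => z) i} := by
  ext ω
  simp [Nat.le_zero]

/-- The Markov property at a deterministic time, in pushforward form. -/
lemma markov_restrict_map (hK : ∀ y, IsProbabilityMeasure (K y))
    (P : G → Measure (ℕ → G)) [∀ y, IsProbabilityMeasure (P y)]
    (hP : ∀ y, IsPathLaw K y (P y)) (x z : G) (m : ℕ) :
    ((P x).restrict {ω | ω m = z}).map (shift m) = (P x {ω | ω m = z}) • P z := by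
  have hA : MeasurableSet {ω : ℕ → G | ω m = z} := measurableSet_coordEq m z
  haveI : IsFiniteMeasure (((P x).restrict {ω | ω m = z}).map (shift m)) :=
    Measure.isFiniteMeasure_map _ _
  haveI : IsFiniteMeasure ((P x {ω | ω m = z}) • P z) := by
    constructor
    rw [Measure.smul_apply, smul_eq_mul]
    exact ENNReal.mul_lt_top (measure_lt_top _ _) (measure_lt_top _ _)
  apply ext_of_generate_finite (cylSet (G := G)) generateFrom_cylSet isPiSystem_cylSet
  · rintro _ ⟨n, u, rfl⟩
    rw [Measure.map_apply (measurable_shift m) (measurableSet_cyl n u),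
      Measure.restrict_apply ((measurable_shift m) (measurableSet_cyl n u))]
    have hpre : shift m ⁻¹' cyl n u = {ω : ℕ → G | ∀ i ≤ n, ω (m + i) = u i} := rfl
    rw [Measure.smul_apply, smul_eq_mul]
    by_cases hz : u 0 = z
    · have hset : shift m ⁻¹' cyl n u ∩ {ω | ω m = z}
          = {ω : ℕ → G | ∀ i ≤ n, ω (m + i) = u i} := by
        rw [hpre]
        apply Set.inter_eq_self_of_subset_left
        intro ω hω
        have := hω 0 (Nat.zero_le n)
        simp only [Nat.add_zero] at this
        simp [Set.mem_setOf_eq, this, hz]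
      rw [hset, pathLaw_shiftCyl K (hP x) m n u, coordSet_eq m z,
        pathLaw_shiftCyl K (hP x) m 0 (fun _ => z)]
      simp only [Finset.range_zero, Finset.prod_empty, mul_one]
      rw [pathLaw_cyl' K (hP z) n u hz]
      congr 2
      rw [hz]
    · have hset : shift m ⁻¹' cyl n u ∩ {ω | ω m = z} = ∅ := by
        rw [hpre]
        ext ω
        simp only [Set.mem_inter_iff, Set.mem_setOf_eq, Set.mem_empty_iff_false, iff_false,
          not_and]
        intro hω hm
        have := hω 0 (Nat.zero_le n)
        simp only [Nat.add_zero] at this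
        exact hz (by rw [← this, hm])
      rw [hset]
      have : P z (cyl n u) = 0 := pathLaw_cyl_zero K (hP z) hz
      rw [this, mul_zero, measure_empty]
  · rw [Measure.map_apply (measurable_shift m) MeasurableSet.univ]
    simp only [Set.preimage_univ, Measure.restrict_apply MeasurableSet.univ, Set.univ_inter,
      Measure.smul_apply, smul_eq_mul, measure_univ, mul_one]

end Auxiliary

section MainAux

variable [Countable G] [MeasurableSpace G] [MeasurableSingletonClass G]

lemma measurableSet_eqSet (m n : ℕ) :
    MeasurableSet {q : (ℕ → G) × (ℕ → G) | q.1 m = q.2 n} := by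
  have : {q : (ℕ → G) × (ℕ → G) | q.1 m = q.2 n}
      = ⋃ g : G, ({ω : ℕ → G | ω m = g} ×ˢ {ω : ℕ → G | ω n = g}) := by
    ext q
    simp only [Set.mem_setOf_eq, Set.mem_iUnion, Set.mem_prod]
    exact ⟨fun h => ⟨q.2 n, h, rfl⟩, fun ⟨g, h1, h2⟩ => by rw [h1, h2]⟩
  rw [this]
  exact MeasurableSet.iUnion fun g =>
    ((measurableSet_coordEq m g).prod (measurableSet_coordEq n g))

lemma measurableSet_collNonempty :
    MeasurableSet {q : (ℕ → G) × (ℕ → G) | (collisions q.1 q.2).Nonempty} := by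
  have : {q : (ℕ → G) × (ℕ → G) | (collisions q.1 q.2).Nonempty}
      = ⋃ (m : ℕ) (n : ℕ) (_ : 1 ≤ m) (_ : 1 ≤ n), {q : (ℕ → G) × (ℕ → G) | q.1 m = q.2 n} := by
    ext q
    simp only [Set.mem_setOf_eq, Set.mem_iUnion]
    constructor
    · rintro ⟨⟨m, n⟩, hm, hn, h⟩
      exact ⟨m, n, hm, hn, h⟩
    · rintro ⟨m, n, hm, hn, h⟩
      exact ⟨⟨m, n⟩, hm, hn, h⟩
  rw [this]
  exact MeasurableSet.iUnion fun m => MeasurableSet.iUnion fun n =>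
    MeasurableSet.iUnion fun _ => MeasurableSet.iUnion fun _ => measurableSet_eqSet m n

end MainAux

/-- If two independent chains from any common starting point a.s. collide,
then they a.s. collide infinitely many times. -/
theorem almost_sure_collision_implies_infinite_collisions
    [Countable G] [MeasurableSpace G] [MeasurableSingletonClass G]
    (K : G → Measure G) (hK : ∀ x, IsProbabilityMeasure (K x)) (hcf : CycleFree K)
    (P : G → Measure (ℕ → G)) [∀ x, IsProbabilityMeasure (P x)]
    (hP : ∀ x, IsPathLaw K x (P x))
    (hcoll : ∀ z : G, ((P z).prod (P z)) {q | (collisions q.1 q.2).Nonempty} = 1) :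
    ∀ z : G, ∀ᵐ q ∂((P z).prod (P z)), (collisions q.1 q.2).Infinite := by
  intro z
  set μ := (P z).prod (P z) with hμ
  -- the set where the shifted paths never collide is null under any `(P w).prod (P w)`
  have hNoColl : ∀ w : G,
      ((P w).prod (P w)) {q : (ℕ → G) × (ℕ → G) | (collisions q.1 q.2).Nonempty}ᶜ = 0 := by
    intro w
    rw [prob_compl_eq_zero_iff measurableSet_collNonempty]
    exact hcoll w
  -- the "last collision at (m,n)" events
  set E : ℕ → ℕ → Set ((ℕ → G) × (ℕ → G)) := fun m n =>
    {q | q.1 m = q.2 n ∧ ∀ a b, 1 ≤ a → 1 ≤ b → q.1 (m + a) ≠ q.2 (n + b)} with hE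
  have hEnull : ∀ m n, μ (E m n) = 0 := by
    intro m n
    set N := {q : (ℕ → G) × (ℕ → G) | (collisions q.1 q.2).Nonempty}ᶜ with hN
    have hNmeas : MeasurableSet N := measurableSet_collNonempty.compl
    have hfmeas : Measurable (Prod.map (shift (G := G) m) (shift (G := G) n)) :=
      (measurable_shift m).prodMap (measurable_shift n)
    have hcover : E m n ⊆ ⋃ w : G,
        (({ω : ℕ → G | ω m = w} ×ˢ {ω : ℕ → G | ω n = w})
          ∩ (Prod.map (shift (G := G) m) (shift (G := G) n)) ⁻¹' N) := by
      rintro q ⟨hq1, hq2⟩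
      refine Set.mem_iUnion.2 ⟨q.1 m, ⟨⟨rfl, hq1.symm⟩, ?_⟩⟩
      simp only [Set.mem_preimage, hN, Set.mem_compl_iff, Set.mem_setOf_eq]
      rintro ⟨⟨a, b⟩, ha, hb, hab⟩
      exact hq2 a b ha hb hab
    refine le_antisymm ?_ zero_le
    refine le_trans (measure_mono hcover) ?_
    refine le_trans (measure_iUnion_le _) ?_
    have hterm : ∀ w : G,
        μ (({ω : ℕ → G | ω m = w} ×ˢ {ω : ℕ → G | ω n = w})
          ∩ (Prod.map (shift (G := G) m) (shift (G := G) n)) ⁻¹' N) = 0 := by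
      intro w
      have hAmeas : MeasurableSet {ω : ℕ → G | ω m = w} := measurableSet_coordEq m w
      have hBmeas : MeasurableSet {ω : ℕ → G | ω n = w} := measurableSet_coordEq n w
      rw [Set.inter_comm, ← Measure.restrict_apply (hfmeas hNmeas),
        ← Measure.prod_restrict, ← Measure.map_apply hfmeas hNmeas,
        ← Measure.map_prod_map _ _ (measurable_shift m) (measurable_shift n),
        markov_restrict_map K hK P hP z w m, markov_restrict_map K hK P hP z w n]
      have habs : ((P z {ω | ω m = w} • P w).prod (P z {ω | ω n = w} • P w))
          ≪ ((P w).prod (P w)) :=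
        Measure.AbsolutelyContinuous.prod Measure.smul_absolutelyContinuous
          Measure.smul_absolutelyContinuous
      exact habs (hNoColl w)
    simp [hterm]
  -- covering the "finitely many collisions" event
  rw [ae_iff]
  have hcover : {q : (ℕ → G) × (ℕ → G) | ¬ (collisions q.1 q.2).Infinite}
      ⊆ {q : (ℕ → G) × (ℕ → G) | (collisions q.1 q.2).Nonempty}ᶜ
        ∪ ⋃ (m : ℕ) (n : ℕ), E m n := by
    intro q hq
    rw [Set.mem_setOf_eq, Set.not_infinite] at hq
    by_cases hne : (collisions q.1 q.2).Nonempty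
    · right
      obtain ⟨⟨m, n⟩, hmem, hmax⟩ :=
        Set.Finite.exists_maximalFor (fun p : ℕ × ℕ => p.1 + p.2) _ hq hne
      obtain ⟨hm, hn, hcol⟩ := hmem
      refine Set.mem_iUnion.2 ⟨m, Set.mem_iUnion.2 ⟨n, hcol, ?_⟩⟩
      intro a b ha hb hab
      have hmem' : (⟨m + a, n + b⟩ : ℕ × ℕ) ∈ collisions q.1 q.2 :=
        ⟨by omega, by omega, hab⟩
      have := hmax hmem' (by simp; omega)
      simp at this
      omega
    · left
      exact hne
  refine le_antisymm ?_ zero_le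
  refine le_trans (measure_mono hcover) ?_
  refine le_trans (measure_union_le _ _) ?_
  rw [hNoColl z, zero_add]
  refine le_trans (measure_iUnion_le _) ?_
  have : ∀ m : ℕ, μ (⋃ n : ℕ, E m n) = 0 := by
    intro m
    refine le_antisymm ?_ zero_le
    refine le_trans (measure_iUnion_le _) ?_
    simp [hEnull]
  simp [this]

end CMTPaper
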